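/- Let k ≥ 1, let x_1, ..., x_k be pairwise distinct reals, and let j ≥ 0. Then for all x ∈ ℝ, x^{k+j} - ∑_{l=1}^{k} x_l^{k+j} ∏_{r≠l} (x - x_r)/(x_l - x_r) = ∏_{r=1}^{k}(x - x_r) · ∑_{i=0}^{j} ( ∑_{l=1}^{k} x_l^{k+j-1-i} / ∏_{r≠l}(x_l - x_r) ) x^i. -/
import Mathlib


open Finset

theorem lagrange_pow_aux (k : ℕ) (x : Fin k → ℝ) (hx : Function.Injective x) (m : ℕ)
    (hm : m < k) (t : ℝ) :
    ∑ l : Fin k, x l ^ m * ∏ r ∈ univ.erase l, ((t - x r) / (x l - x r)) = t ^ m := by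
  have hinj : Set.InjOn x (univ : Finset (Fin k)) := fun a _ b _ h => hx h
  have hdeg : (Polynomial.X ^ m : Polynomial ℝ).degree < (univ : Finset (Fin k)).card := by
    simp [Polynomial.degree_X_pow, Nat.cast_lt, hm]
  have h := Lagrange.eq_interpolate (v := x) hinj hdeg
  have h2 := congrArg (Polynomial.eval t) h
  simp only [Lagrange.interpolate_apply, Polynomial.eval_pow, Polynomial.eval_X,
    Polynomial.eval_finset_sum, Polynomial.eval_mul, Polynomial.eval_C,
    Lagrange.basis, Polynomial.eval_prod, Lagrange.basisDivisor,
    Polynomial.eval_sub] at h2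
  rw [h2]
  refine Finset.sum_congr rfl fun l _ => ?_
  refine congrArg _ (Finset.prod_congr rfl fun r _ => ?_)
  rw [div_eq_inv_mul]

/-- For `k ≥ 1` pairwise distinct reals `x 0, …, x (k-1)`, `j ≥ 0` and all `t`,
the monomial `t^(k+j)` minus its Lagrange interpolation polynomial at the nodes
factors as `∏ r (t - x r)` times an explicit polynomial of degree `j`. -/
theorem stmt_7 (k : ℕ) (hk : 1 ≤ k) (x : Fin k → ℝ) (hx : Function.Injective x)
    (j : ℕ) (t : ℝ) :
    t ^ (k + j) - ∑ l : Fin k, x l ^ (k + j) * ∏ r ∈ univ.erase l, (t - x r) / (x l - x r)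
      = (∏ r : Fin k, (t - x r)) *
          ∑ i ∈ range (j + 1),
            (∑ l : Fin k, x l ^ (k + j - 1 - i) / ∏ r ∈ univ.erase l, (x l - x r)) * t ^ i := by
  rw [sub_eq_iff_eq_add]
  -- distribute the product into the double sum and swap the sums
  have hswap :
      (∏ r : Fin k, (t - x r)) *
          ∑ i ∈ range (j + 1),
            (∑ l : Fin k, x l ^ (k + j - 1 - i) / ∏ r ∈ univ.erase l, (x l - x r)) * t ^ i
        = ∑ l : Fin k, ∑ i ∈ range (j + 1),
            (∏ r : Fin k, (t - x r)) *
              (x l ^ (k + j - 1 - i) / ∏ r ∈ univ.erase l, (x l - x r)) * t ^ i := by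
    rw [Finset.mul_sum, Finset.sum_comm]
    refine Finset.sum_congr rfl fun i _ => ?_
    rw [Finset.sum_mul, Finset.mul_sum]
    exact Finset.sum_congr rfl fun l _ => by ring
  rw [hswap, ← Finset.sum_add_distrib]
  have key : ∀ l : Fin k,
      (∑ i ∈ range (j + 1),
          (∏ r : Fin k, (t - x r)) *
            (x l ^ (k + j - 1 - i) / ∏ r ∈ univ.erase l, (x l - x r)) * t ^ i)
        + x l ^ (k + j) * ∏ r ∈ univ.erase l, (t - x r) / (x l - x r)
      = t ^ (j + 1) * (x l ^ (k - 1) * ∏ r ∈ univ.erase l, ((t - x r) / (x l - x r))) := by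
    intro l
    set Pl : ℝ := ∏ r ∈ univ.erase l, (t - x r) with hPl
    set D : ℝ := ∏ r ∈ univ.erase l, (x l - x r) with hD
    have hDne : D ≠ 0 := by
      refine Finset.prod_ne_zero_iff.2 fun r hr => sub_ne_zero.2 fun h => ?_
      exact (Finset.mem_erase.1 hr).1 (hx h).symm
    have hP : (∏ r : Fin k, (t - x r)) = (t - x l) * Pl :=
      (Finset.mul_prod_erase univ _ (Finset.mem_univ l)).symm
    have hquot : (∏ r ∈ univ.erase l, ((t - x r) / (x l - x r))) = Pl / D := by
      rw [hPl, hD, Finset.prod_div_distrib]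
    have hgeom : (∑ i ∈ range (j + 1), t ^ i * x l ^ (j - i)) * (t - x l)
        = t ^ (j + 1) - x l ^ (j + 1) := by
      have := geom_sum₂_mul t (x l) (j + 1)
      simpa using this
    have hB : (∑ i ∈ range (j + 1),
          (∏ r : Fin k, (t - x r)) *
            (x l ^ (k + j - 1 - i) / ∏ r ∈ univ.erase l, (x l - x r)) * t ^ i)
        = x l ^ (k - 1) * D⁻¹ * Pl * (t ^ (j + 1) - x l ^ (j + 1)) := by
      rw [← hgeom]
      have : ∀ i ∈ range (j + 1),
          (∏ r : Fin k, (t - x r)) * (x l ^ (k + j - 1 - i) / D) * t ^ i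
            = x l ^ (k - 1) * D⁻¹ * Pl * ((t ^ i * x l ^ (j - i)) * (t - x l)) := by
        intro i hi
        have hij : i ≤ j := Nat.lt_succ_iff.1 (Finset.mem_range.1 hi)
        have hexp : x l ^ (k + j - 1 - i) = x l ^ (k - 1) * x l ^ (j - i) := by
          rw [← pow_add]; congr 1; omega
        rw [hP, hexp]; ring
      rw [Finset.sum_congr rfl this, ← Finset.mul_sum, Finset.sum_mul]
    rw [hB, hquot]
    have hxkj : x l ^ (k + j) = x l ^ (k - 1) * x l ^ (j + 1) := by
      rw [← pow_add]; congr 1; omega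
    rw [hxkj]
    field_simp
    ring
  rw [Finset.sum_congr rfl fun l _ => key l, ← Finset.mul_sum,
    lagrange_pow_aux k x hx (k - 1) (by omega) t, ← pow_add]
  congr 1
  omega
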